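/- Let M be an orthogonal projection on a finite-dimensional Hilbert space and φ a density operator with γ = 1 - Tr(Mφ) > 0 and Tr(Mφ) > 0. Let φ' = MφM / Tr(Mφ). Then ‖φ' - φ‖₁ ≤ 2√γ. -/

import Mathlib

set_option maxHeartbeats 1600000

open scoped BigOperators Matrix ComplexOrder
open scoped MatrixOrder

/-- The trace norm of a complex square matrix: the sum of its singular values,
i.e. of the square roots of the eigenvalues of `Aᴴ * A`. -/
noncomputable def traceNorm {X : Type*} [Fintype X] [DecidableEq X]
    (A : Matrix X X ℂ) : ℝ :=
  ∑ i, Real.sqrt ((Matrix.isHermitian_conjTranspose_mul_self A).eigenvalues i)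

namespace GentleAux
open Matrix Complex

variable {d : Type*} [Fintype d] [DecidableEq d]

lemma star_mul_self_u (U : Matrix.unitaryGroup d ℂ) :
    (star (U : Matrix d d ℂ)) * (U : Matrix d d ℂ) = 1 :=
  Matrix.mem_unitaryGroup_iff'.mp U.2

lemma conj_mul_conj (U : Matrix.unitaryGroup d ℂ) (D E : Matrix d d ℂ) :
    ((U : Matrix d d ℂ) * D * star (U : Matrix d d ℂ)) *
      ((U : Matrix d d ℂ) * E * star (U : Matrix d d ℂ))
      = (U : Matrix d d ℂ) * (D * E) * star (U : Matrix d d ℂ) := by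
  have h := star_mul_self_u U
  calc ((U : Matrix d d ℂ) * D * star (U : Matrix d d ℂ)) *
      ((U : Matrix d d ℂ) * E * star (U : Matrix d d ℂ))
      = (U : Matrix d d ℂ) * D * ((star (U : Matrix d d ℂ)) * (U : Matrix d d ℂ)) * E *
        star (U : Matrix d d ℂ) := by noncomm_ring
    _ = _ := by rw [h]; noncomm_ring

lemma trace_conj (U : Matrix.unitaryGroup d ℂ) (D : Matrix d d ℂ) :
    ((U : Matrix d d ℂ) * D * star (U : Matrix d d ℂ)).trace = D.trace := by
  rw [Matrix.trace_mul_cycle, star_mul_self_u U, Matrix.one_mul]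

lemma conjT_conj (U : Matrix.unitaryGroup d ℂ) (D : Matrix d d ℂ) :
    ((U : Matrix d d ℂ) * D * star (U : Matrix d d ℂ))ᴴ
      = (U : Matrix d d ℂ) * Dᴴ * star (U : Matrix d d ℂ) := by
  simp [Matrix.conjTranspose_mul, Matrix.star_eq_conjTranspose, Matrix.mul_assoc]

lemma traceNorm_herm (T : Matrix d d ℂ) (hT : T.IsHermitian) :
    ∃ W : Matrix d d ℂ, Wᴴ * W = 1 ∧ traceNorm T = ((W * T).trace).re := by
  set U := hT.eigenvectorUnitary with hU
  set lam := hT.eigenvalues with hlam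
  set s : d → ℂ := fun i => if lam i < 0 then -1 else 1 with hs
  refine ⟨(U : Matrix d d ℂ) * diagonal s * star (U : Matrix d d ℂ), ?_, ?_⟩
  · rw [conjT_conj, diagonal_conjTranspose]
    rw [conj_mul_conj, diagonal_mul_diagonal]
    have : (fun i => star s i * s i) = fun _ => (1 : ℂ) := by
      funext i
      simp only [hs]
      by_cases h : lam i < 0 <;> simp [h]
    rw [this]
    have : diagonal (fun _ => (1:ℂ)) = (1 : Matrix d d ℂ) := diagonal_one
    rw [this, Matrix.mul_one, Matrix.mem_unitaryGroup_iff.mp U.2]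
  · -- trace side
    have hspec : T = (U : Matrix d d ℂ) * diagonal (RCLike.ofReal ∘ lam) *
        star (U : Matrix d d ℂ) := hT.spectral_theorem
    have htr : (((U : Matrix d d ℂ) * diagonal s * star (U : Matrix d d ℂ)) * T).trace
        = ∑ i, s i * (lam i : ℂ) := by
      conv_lhs => rw [hspec, conj_mul_conj, trace_conj, diagonal_mul_diagonal,
        trace_diagonal]
      rfl
    have htr' : (((U : Matrix d d ℂ) * diagonal s * star (U : Matrix d d ℂ)) * T).trace.re
        = ∑ i, |lam i| := by
      rw [htr, Complex.re_sum]
      refine Finset.sum_congr rfl fun i _ => ?_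
      simp only [hs]
      split_ifs with h
      · simp [abs_of_neg h]
      · simp [_root_.abs_of_nonneg (not_lt.mp h)]
    rw [htr']
    have hB : (Tᴴ * T).PosSemidef := posSemidef_conjTranspose_mul_self T
    set S : Matrix d d ℂ := (U : Matrix d d ℂ) * diagonal (fun i => ((|lam i| : ℝ) : ℂ)) *
      star (U : Matrix d d ℂ) with hSdef
    have hS : S.PosSemidef := by
      have hrw : S = (U : Matrix d d ℂ) * diagonal (fun i => ((|lam i| : ℝ) : ℂ)) *
          ((U : Matrix d d ℂ))ᴴ := by
        rw [hSdef, Matrix.star_eq_conjTranspose]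
      rw [hrw]
      exact (posSemidef_diagonal_iff.mpr fun i => by
        rw [Complex.zero_le_real]; exact abs_nonneg _).mul_mul_conjTranspose_same _
    have hS2 : S ^ 2 = Tᴴ * T := by
      rw [pow_two, hSdef, conj_mul_conj, diagonal_mul_diagonal, hT.eq]
      conv_rhs => rw [hspec, conj_mul_conj, diagonal_mul_diagonal]
      have harg : (fun i => ((|lam i| : ℝ) : ℂ) * ((|lam i| : ℝ) : ℂ))
          = fun i => (RCLike.ofReal ∘ lam) i * (RCLike.ofReal ∘ lam) i := by
        funext i
        show ((|lam i| : ℝ) : ℂ) * ((|lam i| : ℝ) : ℂ) = ((lam i : ℝ) : ℂ) * ((lam i : ℝ) : ℂ)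
        rw [← Complex.ofReal_mul, ← Complex.ofReal_mul, abs_mul_abs_self]
      rw [harg]
    have hSsqrt : S = hB.1.cfc Real.sqrt := by
      rw [← ((CFC.sqrt_eq_iff _ _ hB.nonneg hS.nonneg).mpr (by rw [← sq]; exact hS2)),
        CFC.sqrt_eq_cfc, cfc_nnreal_eq_real _ _ hB.nonneg, hB.1.cfc_eq]
      rw [show (fun x : ℝ => ((NNReal.sqrt x.toNNReal : ℝ))) = Real.sqrt from
        funext fun x => (Real.sqrt.eq_1 x).symm]
    have h1 : traceNorm T = (hB.1.cfc Real.sqrt).trace.re := by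
      have hd : hB.1.cfc Real.sqrt = (hB.1.eigenvectorUnitary : Matrix d d ℂ) *
          diagonal (Complex.ofReal ∘ Real.sqrt ∘ hB.1.eigenvalues) *
          star (hB.1.eigenvectorUnitary : Matrix d d ℂ) := rfl
      rw [hd, trace_conj hB.1.eigenvectorUnitary, trace_diagonal, Complex.re_sum]
      simp [traceNorm]
    have h2 : (hB.1.cfc Real.sqrt).trace.re = ∑ i, |lam i| := by
      rw [← hSsqrt, hSdef, trace_conj, trace_diagonal, Complex.re_sum]
      simp
    rw [h1, h2]

lemma trace_conjT_mul (E F : Matrix d d ℂ) :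
    (Eᴴ * F).trace = ∑ p : d × d, star (E p.1 p.2) * F p.1 p.2 := by
  rw [Matrix.trace]
  simp only [Matrix.diag_apply, Matrix.mul_apply, Matrix.conjTranspose_apply]
  rw [Finset.sum_comm, ← Fintype.sum_prod_type']

lemma trace_conjT_mul_self_re (C : Matrix d d ℂ) :
    (Cᴴ * C).trace.re = ∑ p : d × d, ‖C p.1 p.2‖ ^ 2 := by
  rw [trace_conjT_mul, Complex.re_sum]
  refine Finset.sum_congr rfl fun p _ => ?_
  rw [RCLike.star_def, mul_comm, Complex.mul_conj']
  rw [← Complex.ofReal_pow, Complex.ofReal_re]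

lemma abs_trace_conjT_mul_le (C D : Matrix d d ℂ) :
    ‖(Cᴴ * D).trace‖ ≤
      Real.sqrt ((Cᴴ * C).trace.re) * Real.sqrt ((Dᴴ * D).trace.re) := by
  rw [trace_conjT_mul, trace_conjT_mul_self_re, trace_conjT_mul_self_re]
  calc ‖∑ p : d × d, star (C p.1 p.2) * D p.1 p.2‖
      ≤ ∑ p : d × d, ‖C p.1 p.2‖ * ‖D p.1 p.2‖ := by
        refine le_trans (norm_sum_le _ _) (le_of_eq ?_)
        refine Finset.sum_congr rfl fun p _ => ?_
        rw [norm_mul, RCLike.star_def, Complex.norm_conj]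
    _ ≤ _ := Real.sum_mul_le_sqrt_mul_sqrt _ _ _

lemma trace_nonneg_psd {A : Matrix d d ℂ} (hA : A.PosSemidef) : 0 ≤ A.trace := by
  rw [Matrix.trace]
  refine Finset.sum_nonneg fun i _ => ?_
  exact hA.diag_nonneg

end GentleAux

open GentleAux Matrix Complex

/-- gentle measurement lemma: if `M` is an orthogonal projection
and `φ` a density matrix with `Tr(Mφ) > 0` and `γ = 1 - Tr(Mφ)`, then
`‖ MφM/Tr(Mφ) - φ ‖₁ ≤ 2√γ`. -/
theorem gentle_measurement {d : Type*} [Fintype d] [DecidableEq d]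
    (M φ : Matrix d d ℂ)
    (hM : M.IsHermitian) (hMproj : M * M = M)
    (hφ : φ.PosSemidef) (hφtr : φ.trace = 1)
    (γ : ℝ) (hγ : γ = 1 - (M * φ).trace.re) (hγpos : 0 < (M * φ).trace.re)
    (φ' : Matrix d d ℂ)
    (hφ' : φ' = ((M * φ).trace.re : ℂ)⁻¹ • (M * φ * M)) :
    traceNorm (φ' - φ) ≤ 2 * Real.sqrt γ := by
  set p : ℝ := (M * φ).trace.re with hp
  have hp0 : 0 < p := hγpos
  -- the trace of M φ is real
  have hreal : (M * φ).trace = (p : ℂ) := by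
    have h1 : (starRingEnd ℂ) ((M * φ).trace) = (M * φ).trace := by
      have := Matrix.trace_conjTranspose (M * φ)
      rw [Matrix.conjTranspose_mul, hφ.1.eq, hM.eq, Matrix.trace_mul_comm] at this
      exact this.symm
    exact (Complex.conj_eq_iff_re.mp h1).symm
  have e2 : (φ * M).trace = (p : ℂ) := by rw [Matrix.trace_mul_comm]; exact hreal
  have e3 : (M * φ * M).trace = (p : ℂ) := by
    rw [Matrix.trace_mul_cycle, hMproj]; exact hreal
  -- p ≤ 1
  have hp1 : p ≤ 1 := by
    have hNH : (1 - M : Matrix d d ℂ)ᴴ = 1 - M := by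
      rw [Matrix.conjTranspose_sub, Matrix.conjTranspose_one, hM.eq]
    have hpsd : ((1 - M) * φ * (1 - M)ᴴ).PosSemidef := hφ.mul_mul_conjTranspose_same _
    rw [hNH] at hpsd
    have htr : ((1 - M) * φ * (1 - M)).trace = 1 - (p : ℂ) := by
      have e1 : (1 - M) * φ * (1 - M) = φ - M * φ - φ * M + M * φ * M := by noncomm_ring
      rw [e1, Matrix.trace_add, Matrix.trace_sub, Matrix.trace_sub, hφtr, hreal, e2, e3]
      ring
    have h0 : (0 : ℂ) ≤ 1 - (p : ℂ) := htr ▸ trace_nonneg_psd hpsd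
    have : (0:ℝ) ≤ 1 - p := by
      have := Complex.le_def.mp h0
      simpa using this.1
    linarith
  -- square root of φ
  set X := CFC.sqrt φ with hX
  have hXpsd : X.PosSemidef := (CFC.sqrt_nonneg φ).posSemidef
  have hXh : Xᴴ = X := hXpsd.1
  have hXX : X * X = φ := CFC.sqrt_mul_sqrt_self φ hφ.nonneg
  set sp := Real.sqrt p with hsp
  have hsp0 : 0 < sp := Real.sqrt_pos.mpr hp0
  have hspsq : sp * sp = p := Real.mul_self_sqrt hp0.le
  have hsp1 : sp ≤ 1 := Real.sqrt_le_one.mpr hp1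
  set c : ℂ := ((sp : ℂ))⁻¹ with hc
  have hcstar : star c = c := by
    rw [hc, ← Complex.ofReal_inv]
    exact Complex.conj_ofReal _
  have hcc : c * c = ((p : ℂ))⁻¹ := by
    rw [hc, ← mul_inv, ← Complex.ofReal_mul, hspsq]
  set N := M * X with hN
  set Y := c • N with hY
  have hpC : (p : ℂ) ≠ 0 := Complex.ofReal_ne_zero.mpr hp0.ne'
  -- basic complex traces
  have tXX : (Xᴴ * X).trace = 1 := by rw [hXh, hXX, hφtr]
  have hXMX : (X * M * X).trace = (p : ℂ) := by
    rw [Matrix.trace_mul_cycle, hXX]; exact e2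
  have tXN : (Xᴴ * N).trace = (p : ℂ) := by
    rw [hXh, hN, ← Matrix.mul_assoc]; exact hXMX
  have hNHe : Nᴴ = X * M := by rw [hN, Matrix.conjTranspose_mul, hXh, hM.eq]
  have tNX : (Nᴴ * X).trace = (p : ℂ) := by
    rw [hNHe]; exact hXMX
  have tNN : (Nᴴ * N).trace = (p : ℂ) := by
    have h : Nᴴ * N = X * M * X := by
      rw [hNHe, hN]
      calc X * M * (M * X) = X * (M * M) * X := by noncomm_ring
        _ = X * M * X := by rw [hMproj]
    rw [h]; exact hXMX
  -- expansion of quadratic traces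
  have expandP : ∀ Z V : Matrix d d ℂ, ((Z + V)ᴴ * (Z + V)).trace
      = (Zᴴ * Z).trace + (Zᴴ * V).trace + (Vᴴ * Z).trace + (Vᴴ * V).trace := by
    intro Z V
    rw [Matrix.conjTranspose_add, Matrix.add_mul, Matrix.mul_add, Matrix.mul_add,
      Matrix.trace_add, Matrix.trace_add, Matrix.trace_add]
    ring
  have expandS : ∀ Z V : Matrix d d ℂ, ((Z - V)ᴴ * (Z - V)).trace
      = (Zᴴ * Z).trace - (Zᴴ * V).trace - (Vᴴ * Z).trace + (Vᴴ * V).trace := by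
    intro Z V
    rw [Matrix.conjTranspose_sub, Matrix.sub_mul, Matrix.mul_sub, Matrix.mul_sub,
      Matrix.trace_sub, Matrix.trace_sub, Matrix.trace_sub]
    ring
  have tsmul : ∀ Z V : Matrix d d ℂ, ((c • Z)ᴴ * V).trace = c * (Zᴴ * V).trace := by
    intro Z V
    rw [Matrix.conjTranspose_smul, hcstar, Matrix.smul_mul, Matrix.trace_smul, smul_eq_mul]
  have tsmul' : ∀ Z V : Matrix d d ℂ, (Zᴴ * (c • V)).trace = c * (Zᴴ * V).trace := by
    intro Z V
    rw [Matrix.mul_smul, Matrix.trace_smul, smul_eq_mul]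
  have hcp : c * (p : ℂ) = (sp : ℂ) := by
    rw [hc, ← Complex.ofReal_inv, ← Complex.ofReal_mul]
    congr 1
    rw [← hspsq]
    field_simp
  have tA : ((Y - X)ᴴ * (Y - X)).trace = ((2 - 2 * sp : ℝ) : ℂ) := by
    rw [hY, expandS]
    simp only [tsmul, tsmul']
    rw [tNN, tNX, tXN, tXX,
      show c * (c * (p:ℂ)) = (c * c) * (p:ℂ) from by ring, hcc,
      inv_mul_cancel₀ hpC, hcp]
    push_cast
    ring
  have tB : ((Y + X)ᴴ * (Y + X)).trace = ((2 + 2 * sp : ℝ) : ℂ) := by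
    rw [hY, expandP]
    simp only [tsmul, tsmul']
    rw [tNN, tNX, tXN, tXX,
      show c * (c * (p:ℂ)) = (c * c) * (p:ℂ) from by ring, hcc,
      inv_mul_cancel₀ hpC, hcp]
    push_cast
    ring
  -- φ' and φ as squares
  have hYY : Y * Yᴴ = φ' := by
    rw [hφ', hY, Matrix.conjTranspose_smul, hcstar, Matrix.smul_mul, Matrix.mul_smul,
      smul_smul, hcc]
    congr 1
    rw [hN, Matrix.conjTranspose_mul, hXh, hM.eq]
    calc M * X * (X * M) = M * (X * X) * M := by noncomm_ring
      _ = M * φ * M := by rw [hXX]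
  have hXXp : X * Xᴴ = φ := by rw [hXh, hXX]
  have hId : φ' - φ = (2 : ℂ)⁻¹ • ((Y - X) * (Y + X)ᴴ + (Y + X) * (Y - X)ᴴ) := by
    have h2 : (Y - X) * (Y + X)ᴴ + (Y + X) * (Y - X)ᴴ = (2:ℂ) • (Y * Yᴴ - X * Xᴴ) := by
      rw [Matrix.conjTranspose_add, Matrix.conjTranspose_sub, two_smul]
      noncomm_ring
    rw [h2, smul_smul, inv_mul_cancel₀ two_ne_zero, one_smul, hYY, hXXp]
  -- the difference is Hermitian
  have hTh : (φ' - φ).IsHermitian := by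
    have h1 : φ'ᴴ = φ' := by
      rw [← hYY, Matrix.conjTranspose_mul, Matrix.conjTranspose_conjTranspose]
    exact Matrix.IsHermitian.sub h1 hφ.1
  obtain ⟨W, hW1, hW2⟩ := traceNorm_herm _ hTh
  rw [hW2]
  set A := Y - X with hA
  set Bm := Y + X with hBm
  have key : (W * (φ' - φ)).trace
      = (2:ℂ)⁻¹ * ((Bmᴴ * (W * A)).trace + (Aᴴ * (W * Bm)).trace) := by
    rw [hId, Matrix.mul_smul, Matrix.trace_smul, smul_eq_mul]
    congr 1
    rw [Matrix.mul_add, Matrix.trace_add]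
    congr 1
    · rw [← Matrix.mul_assoc, Matrix.trace_mul_comm]
    · rw [← Matrix.mul_assoc, Matrix.trace_mul_comm]
  have hWAmat : ∀ Z : Matrix d d ℂ, (W * Z)ᴴ * (W * Z) = Zᴴ * Z := by
    intro Z
    rw [Matrix.conjTranspose_mul]
    calc Zᴴ * Wᴴ * (W * Z) = Zᴴ * (Wᴴ * W) * Z := by noncomm_ring
      _ = Zᴴ * Z := by rw [hW1, Matrix.mul_one]
  have sA : (Aᴴ * A).trace.re = 2 - 2 * sp := by rw [hA, tA, Complex.ofReal_re]
  have sB : (Bmᴴ * Bm).trace.re = 2 + 2 * sp := by rw [hBm, tB, Complex.ofReal_re]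
  have hs2 : (0:ℝ) ≤ 2 - 2 * sp := by linarith
  have b1 : ((Bmᴴ * (W * A)).trace).re ≤ Real.sqrt (2 + 2*sp) * Real.sqrt (2 - 2*sp) := by
    refine le_trans (Complex.re_le_norm _) (le_trans (abs_trace_conjT_mul_le Bm (W*A)) ?_)
    rw [hWAmat, sA, sB]
  have b2 : ((Aᴴ * (W * Bm)).trace).re ≤ Real.sqrt (2 - 2*sp) * Real.sqrt (2 + 2*sp) := by
    refine le_trans (Complex.re_le_norm _) (le_trans (abs_trace_conjT_mul_le A (W*Bm)) ?_)
    rw [hWAmat, sA, sB]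
  have hre : ((W * (φ' - φ)).trace).re
      = 2⁻¹ * (((Bmᴴ * (W * A)).trace).re + ((Aᴴ * (W * Bm)).trace).re) := by
    rw [key, show ((2:ℂ))⁻¹ = ((2⁻¹ : ℝ) : ℂ) by norm_num, Complex.re_ofReal_mul,
      Complex.add_re]
  rw [hre]
  have hγ0 : 0 ≤ γ := by rw [hγ]; linarith
  have step : 2⁻¹ * (((Bmᴴ * (W * A)).trace).re + ((Aᴴ * (W * Bm)).trace).re)
      ≤ Real.sqrt (2 - 2*sp) * Real.sqrt (2 + 2*sp) := by
    have := b1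
    have := b2
    nlinarith [Real.sqrt_nonneg (2 - 2*sp), Real.sqrt_nonneg (2 + 2*sp)]
  refine le_trans step ?_
  have : Real.sqrt (2 - 2*sp) * Real.sqrt (2 + 2*sp) = Real.sqrt ((2 - 2*sp) * (2 + 2*sp)) :=
    (Real.sqrt_mul hs2 _).symm
  rw [this]
  have h4 : (2 - 2*sp) * (2 + 2*sp) = 4 * γ := by
    rw [hγ]
    nlinarith [hspsq]
  rw [h4, show (4:ℝ) * γ = (2:ℝ)^2 * γ by ring, Real.sqrt_mul (by positivity) γ,
    Real.sqrt_sq (by norm_num : (0:ℝ) ≤ 2)]
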